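/- If P: A → A is a filtration-preserving linear map that is moreover an idempotent algebra homomorphism, then the BCH-recursion has the closed form χ(u) = u + BCH(−P(u), u) for all u ∈ A_1; in particular P(χ(u)) = P(u). -/

import Mathlib

open scoped BigOperators

noncomputable def expS (K : Type*) {A : Type*} [Field K] [CharZero K] [Ring A] [Algebra K A]
    [UniformSpace A] (a : A) : A :=
  ∑' n : ℕ, ((n.factorial : K)⁻¹) • a ^ n

noncomputable def logS (K : Type*) {A : Type*} [Field K] [CharZero K] [Ring A] [Algebra K A]
    [UniformSpace A] (a : A) : A :=
  ∑' n : ℕ, (((-1 : K) ^ n) * ((n : K) + 1)⁻¹) • (a - 1) ^ (n + 1)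

noncomputable def BCHs (K : Type*) {A : Type*} [Field K] [CharZero K] [Ring A] [Algebra K A]
    [UniformSpace A] (x y : A) : A :=
  logS K (expS K x * expS K y) - x - y

/-- A complete decreasing multiplicative filtration defining the topology of `A`. -/
def IsCompleteFiltration (K : Type*) {A : Type*} [Field K] [CharZero K] [Ring A] [Algebra K A]
    [UniformSpace A] (F : ℕ → Submodule K A) : Prop :=
  F 0 = ⊤ ∧ (∀ n, F (n + 1) ≤ F n) ∧
    (∀ m n : ℕ, ∀ x ∈ F m, ∀ y ∈ F n, x * y ∈ F (m + n)) ∧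
    (∀ n, IsOpen ((F n : Set A))) ∧
    (∀ U ∈ nhds (0 : A), ∃ n, ((F n : Set A)) ⊆ U)

/-! ### Auxiliary formal power series layer -/

/-- The formal logarithm series `log(1+X) = ∑ (-1)^(k+1) X^k / k`. -/
noncomputable def Lser (K : Type*) [Field K] [CharZero K] : PowerSeries K :=
  PowerSeries.mk fun k => if k = 0 then 0 else (-1 : K) ^ (k + 1) * (k : K)⁻¹

section Formal

variable (K : Type*) [Field K] [CharZero K]

lemma coeff_dL (k : ℕ) :
    PowerSeries.coeff k (PowerSeries.derivative K (Lser K)) = (-1 : K) ^ k := by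
  rw [PowerSeries.coeff_derivative, Lser, PowerSeries.coeff_mk]
  rw [if_neg (Nat.succ_ne_zero k)]
  have h1 : ((k : K) + 1) ≠ 0 := by
    have := Nat.cast_add_one_ne_zero (R := K) k
    simpa using this
  push_cast
  rw [mul_assoc, inv_mul_cancel₀ h1, mul_one, pow_succ, pow_succ]
  ring

lemma one_add_X_mul_dL :
    ((1 : PowerSeries K) + PowerSeries.X) * PowerSeries.derivative K (Lser K) = 1 := by
  ext n
  rw [add_mul, one_mul, map_add]
  cases n with
  | zero =>
    rw [coeff_dL, PowerSeries.coeff_zero_X_mul]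
    simp
  | succ m =>
    rw [coeff_dL, PowerSeries.coeff_succ_X_mul, coeff_dL]
    rw [PowerSeries.coeff_one]
    rw [if_neg (Nat.succ_ne_zero m)]
    rw [pow_succ]
    ring

lemma coeff_exp_eq (n : ℕ) :
    PowerSeries.coeff n (PowerSeries.exp K) = ((n.factorial : K))⁻¹ := by
  rw [PowerSeries.coeff_exp, eq_ratCast (algebraMap ℚ K)]
  push_cast
  rw [one_div]

lemma dE_eq : PowerSeries.derivative K (PowerSeries.exp K) = PowerSeries.exp K := by
  ext k
  rw [PowerSeries.coeff_derivative, coeff_exp_eq, coeff_exp_eq]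
  have h1 : ((k.factorial : K)) ≠ 0 := by
    exact_mod_cast Nat.cast_ne_zero.mpr (Nat.factorial_ne_zero k)
  have h2 : ((k : K) + 1) ≠ 0 := by
    have := Nat.cast_add_one_ne_zero (R := K) k
    simpa using this
  have hfact : (((k + 1).factorial : K)) = ((k.factorial : K)) * ((k : K) + 1) := by
    rw [Nat.factorial_succ]
    push_cast
    ring
  rw [hfact]
  field_simp

lemma zpoly_mul_left {N : ℕ} {r : Polynomial K} (hr : ∀ i < N, r.coeff i = 0)
    (t : Polynomial K) : ∀ i < N, (r * t).coeff i = 0 := by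
  intro i hi
  rw [Polynomial.coeff_mul]
  apply Finset.sum_eq_zero
  rintro ⟨a, b⟩ hab
  have hab' : a + b = i := Finset.HasAntidiagonal.mem_antidiagonal.mp hab
  have ha : a < N := lt_of_le_of_lt (by omega) hi
  simp only []
  rw [hr a ha, zero_mul]

lemma zpoly_mul_right {N : ℕ} {t : Polynomial K} (ht : ∀ i < N, t.coeff i = 0)
    (r : Polynomial K) : ∀ i < N, (r * t).coeff i = 0 := by
  intro i hi
  rw [Polynomial.coeff_mul]
  apply Finset.sum_eq_zero
  rintro ⟨a, b⟩ hab
  have hab' : a + b = i := Finset.HasAntidiagonal.mem_antidiagonal.mp hab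
  have hb : b < N := lt_of_le_of_lt (by omega) hi
  simp only []
  rw [ht b hb, mul_zero]

lemma zpoly_comp {N : ℕ} {s e : Polynomial K} (he : e.coeff 0 = 0)
    (hs : ∀ i < N, s.coeff i = 0) : ∀ i < N, (s.comp e).coeff i = 0 := by
  intro i hi
  rw [Polynomial.comp_eq_sum_left, Polynomial.sum_def, Polynomial.finset_sum_coeff]
  apply Finset.sum_eq_zero
  intro k _
  rw [Polynomial.coeff_C_mul]
  by_cases hkN : k < N
  · rw [hs k hkN, zero_mul]
  · have hX : (Polynomial.X : Polynomial K) ^ k ∣ e ^ k :=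
      pow_dvd_pow_of_dvd (Polynomial.X_dvd_iff.mpr he) k
    have : (e ^ k).coeff i = 0 :=
      Polynomial.X_pow_dvd_iff.mp hX i (lt_of_lt_of_le hi (le_of_not_gt hkN))
    rw [this, mul_zero]

lemma trunc_sub' (n : ℕ) (f g : PowerSeries K) :
    PowerSeries.trunc n (f - g) = PowerSeries.trunc n f - PowerSeries.trunc n g := by
  apply Polynomial.ext
  intro i
  rw [Polynomial.coeff_sub, PowerSeries.coeff_trunc, PowerSeries.coeff_trunc,
    PowerSeries.coeff_trunc]
  split
  · rw [map_sub]
  · rw [sub_zero]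

lemma trunc_one_add_X {m : ℕ} (hm : 2 ≤ m) :
    PowerSeries.trunc m ((1 : PowerSeries K) + PowerSeries.X) = 1 + Polynomial.X := by
  obtain ⟨k, rfl⟩ : ∃ k, m = k + 2 := ⟨m - 2, by omega⟩
  rw [map_add]
  rw [show k + 2 = (k + 1) + 1 from rfl, PowerSeries.trunc_one]
  rw [show (k + 1) + 1 = k + 2 from rfl, PowerSeries.trunc_X]

lemma coeff_comp_neg (r : Polynomial K) (k : ℕ) :
    (r.comp (-Polynomial.X)).coeff k = (-1 : K) ^ k * r.coeff k := by
  induction r using Polynomial.induction_on' with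
  | add p q hp hq =>
    rw [Polynomial.add_comp, Polynomial.coeff_add, hp, hq, Polynomial.coeff_add, mul_add]
  | monomial n a =>
    rw [Polynomial.monomial_comp]
    have h1 : (-Polynomial.X : Polynomial K) ^ n =
        Polynomial.C ((-1 : K) ^ n) * Polynomial.X ^ n := by
      rw [neg_pow]
      congr 1
      rw [map_pow, map_neg, map_one]
    rw [h1, ← mul_assoc, ← map_mul]
    rw [Polynomial.coeff_C_mul, Polynomial.coeff_X_pow, Polynomial.coeff_monomial]
    by_cases hkn : k = n
    · subst hkn
      rw [if_pos rfl, if_pos rfl]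
      ring
    · rw [if_neg hkn, if_neg (fun h => hkn h.symm)]
      ring

lemma htrunc_exp_one : PowerSeries.trunc 1 (PowerSeries.exp K) = 1 := by
  apply Polynomial.ext
  intro m
  rw [PowerSeries.coeff_trunc]
  cases m with
  | zero =>
    rw [if_pos (by omega), coeff_exp_eq]
    simp
  | succ i =>
    rw [if_neg (by omega), Polynomial.coeff_one, if_neg (Nat.succ_ne_zero i)]

lemma htrunc_L_one : PowerSeries.trunc 1 (Lser K) = 0 := by
  apply Polynomial.ext
  intro m
  rw [PowerSeries.coeff_trunc]
  cases m with
  | zero =>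
    rw [if_pos (by omega), Lser, PowerSeries.coeff_mk, if_pos rfl]
    simp
  | succ i =>
    rw [if_neg (by omega)]
    simp

lemma formal_S1 (N : ℕ) : ∀ i < N,
    ((PowerSeries.trunc (N + 2) (Lser K)).comp
      (PowerSeries.trunc (N + 2) (PowerSeries.exp K - 1))).coeff i =
    (Polynomial.X : Polynomial K).coeff i := by
  intro i hi
  have hN : 1 ≤ N := by omega
  set p := PowerSeries.trunc (N + 2) (Lser K) with hp_def
  set e := PowerSeries.trunc (N + 2) (PowerSeries.exp K - 1) with he_def
  have he0 : e.coeff 0 = 0 := by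
    rw [he_def, PowerSeries.coeff_trunc, if_pos (by omega), map_sub, coeff_exp_eq]
    rw [PowerSeries.coeff_one, if_pos rfl]
    simp
  have hdEb : PowerSeries.derivative K (PowerSeries.exp K - 1) = PowerSeries.exp K := by
    rw [map_sub, dE_eq, Derivation.map_one_eq_zero, sub_zero]
  have hdp : Polynomial.derivative p =
      PowerSeries.trunc (N + 1) (PowerSeries.derivative K (Lser K)) := by
    rw [hp_def, show N + 2 = (N + 1) + 1 from rfl, ← PowerSeries.trunc_derivative]
  have hde : Polynomial.derivative e = PowerSeries.trunc (N + 1) (PowerSeries.exp K) := by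
    rw [he_def, show N + 2 = (N + 1) + 1 from rfl, ← PowerSeries.trunc_derivative, hdEb]
  have hZ1 : ∀ j < N + 1,
      (((1 + Polynomial.X : Polynomial K)) * Polynomial.derivative p).coeff j =
      (1 : Polynomial K).coeff j := by
    intro j hj
    rw [hdp, ← trunc_one_add_X K (by omega : 2 ≤ N + 1)]
    have := PowerSeries.coeff_mul_eq_coeff_trunc_mul_trunc
      ((1 : PowerSeries K) + PowerSeries.X) (PowerSeries.derivative K (Lser K)) hj
    rw [one_add_X_mul_dL] at this
    rw [← Polynomial.coeff_coe, Polynomial.coe_mul, ← this]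
    rw [PowerSeries.coeff_one, Polynomial.coeff_one]
  have hZ2 : ∀ j < N + 1,
      (((1 + e) * ((Polynomial.derivative p).comp e)).coeff j = (1 : Polynomial K).coeff j) := by
    have hz : ∀ j < N + 1,
        (((1 + Polynomial.X) * Polynomial.derivative p - 1 : Polynomial K).coeff j) = 0 := by
      intro j hj
      rw [Polynomial.coeff_sub, hZ1 j hj, sub_self]
    have hzc := zpoly_comp K he0 hz
    intro j hj
    have h := hzc j hj
    rw [Polynomial.sub_comp, Polynomial.mul_comp, Polynomial.add_comp, Polynomial.one_comp,
      Polynomial.X_comp] at h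
    rw [Polynomial.coeff_sub, sub_eq_zero] at h
    exact h
  have hde2 : ∀ j < N + 1, (Polynomial.derivative e - (1 + e)).coeff j = 0 := by
    intro j hj
    rw [Polynomial.coeff_sub, hde, PowerSeries.coeff_trunc, if_pos hj]
    rw [Polynomial.coeff_add, Polynomial.coeff_one, he_def, PowerSeries.coeff_trunc,
      if_pos (by omega : j < N + 2), map_sub, PowerSeries.coeff_one]
    split <;> ring
  set q := p.comp e with hq_def
  have hdq : ∀ j < N + 1, (Polynomial.derivative q).coeff j = (1 : Polynomial K).coeff j := by
    intro j hj
    rw [hq_def, Polynomial.derivative_comp]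
    have h3 : (Polynomial.derivative e * ((Polynomial.derivative p).comp e)
        - (1 + e) * ((Polynomial.derivative p).comp e)).coeff j = 0 := by
      rw [← sub_mul]
      exact zpoly_mul_left K hde2 _ j hj
    rw [Polynomial.coeff_sub, sub_eq_zero] at h3
    rw [h3]
    exact hZ2 j hj
  have hq0 : q.coeff 0 = 0 := by
    rw [hq_def, Polynomial.coeff_zero_eq_eval_zero, Polynomial.eval_comp,
      ← Polynomial.coeff_zero_eq_eval_zero, he0, ← Polynomial.coeff_zero_eq_eval_zero]
    rw [hp_def, PowerSeries.coeff_trunc, if_pos (by omega), Lser, PowerSeries.coeff_mk,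
      if_pos rfl]
  rcases i with _ | j
  · rw [hq0, Polynomial.coeff_X_zero]
  · have hd := hdq j (by omega)
    rw [Polynomial.coeff_derivative] at hd
    by_cases hj0 : j = 0
    · subst hj0
      rw [Polynomial.coeff_one, if_pos rfl] at hd
      rw [Polynomial.coeff_X_one]
      have : q.coeff 1 * ((0 : K) + 1) = q.coeff 1 := by ring
      rw [show ((0 : ℕ) : K) = (0 : K) from Nat.cast_zero] at hd
      rw [this] at hd
      exact hd
    · have h1 : (1 : Polynomial K).coeff j = 0 := by
        rw [Polynomial.coeff_one, if_neg hj0]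
      rw [h1] at hd
      have hj1 : ((j : K) + 1) ≠ 0 := by
        have := Nat.cast_add_one_ne_zero (R := K) j
        simpa using this
      have hq1 : q.coeff (j + 1) = 0 := by
        rcases mul_eq_zero.mp hd with h | h
        · exact h
        · exact absurd h hj1
      rw [hq1, Polynomial.coeff_X, if_neg (by omega)]

lemma formal_S2 (N : ℕ) : ∀ i < N,
    ((PowerSeries.trunc (N + 2) (PowerSeries.exp K - 1)).comp
      (PowerSeries.trunc (N + 2) (Lser K))).coeff i =
    (Polynomial.X : Polynomial K).coeff i := by
  intro i hi
  have hN : 1 ≤ N := by omega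
  set e := PowerSeries.trunc (N + 2) (PowerSeries.exp K - 1) with he_def
  set p := PowerSeries.trunc (N + 2) (Lser K) with hp_def
  have hp0 : p.coeff 0 = 0 := by
    rw [hp_def, PowerSeries.coeff_trunc, if_pos (by omega), Lser, PowerSeries.coeff_mk,
      if_pos rfl]
  have hdEb : PowerSeries.derivative K (PowerSeries.exp K - 1) = PowerSeries.exp K := by
    rw [map_sub, dE_eq, Derivation.map_one_eq_zero, sub_zero]
  have hdp : Polynomial.derivative p =
      PowerSeries.trunc (N + 1) (PowerSeries.derivative K (Lser K)) := by
    rw [hp_def, show N + 2 = (N + 1) + 1 from rfl, ← PowerSeries.trunc_derivative]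
  have hde : Polynomial.derivative e = PowerSeries.trunc (N + 1) (PowerSeries.exp K) := by
    rw [he_def, show N + 2 = (N + 1) + 1 from rfl, ← PowerSeries.trunc_derivative, hdEb]
  set q := e.comp p with hq_def
  have hq0 : q.coeff 0 = 0 := by
    rw [hq_def, Polynomial.coeff_zero_eq_eval_zero, Polynomial.eval_comp,
      ← Polynomial.coeff_zero_eq_eval_zero, hp0, ← Polynomial.coeff_zero_eq_eval_zero]
    rw [he_def, PowerSeries.coeff_trunc, if_pos (by omega), map_sub, coeff_exp_eq,
      PowerSeries.coeff_one, if_pos rfl]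
    simp
  -- derivative e agrees with 1 + e below N+1
  have hde2 : ∀ j < N + 1, (Polynomial.derivative e - (1 + e)).coeff j = 0 := by
    intro j hj
    rw [Polynomial.coeff_sub, hde, PowerSeries.coeff_trunc, if_pos hj]
    rw [Polynomial.coeff_add, Polynomial.coeff_one, he_def, PowerSeries.coeff_trunc,
      if_pos (by omega : j < N + 2), map_sub, PowerSeries.coeff_one]
    split <;> ring
  -- (1+X) * derivative p agrees with 1 below N+1
  have hZ1 : ∀ j < N + 1,
      (((1 + Polynomial.X : Polynomial K)) * Polynomial.derivative p).coeff j =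
      (1 : Polynomial K).coeff j := by
    intro j hj
    rw [hdp, ← trunc_one_add_X K (by omega : 2 ≤ N + 1)]
    have := PowerSeries.coeff_mul_eq_coeff_trunc_mul_trunc
      ((1 : PowerSeries K) + PowerSeries.X) (PowerSeries.derivative K (Lser K)) hj
    rw [one_add_X_mul_dL] at this
    rw [← Polynomial.coeff_coe, Polynomial.coe_mul, ← this]
    rw [PowerSeries.coeff_one, Polynomial.coeff_one]
  -- key relation : (1+X) * derivative q ≡ 1 + q below N+1
  have hrel : ∀ j < N + 1,
      (((1 + Polynomial.X : Polynomial K)) * Polynomial.derivative q).coeff j =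
      (1 + q).coeff j := by
    intro j hj
    have hstep1 : ∀ j' < N + 1,
        (Polynomial.derivative q - (1 + q) * Polynomial.derivative p).coeff j' = 0 := by
      intro j' hj'
      rw [hq_def, Polynomial.derivative_comp]
      have : Polynomial.derivative p * ((Polynomial.derivative e).comp p)
          - (1 + e.comp p) * Polynomial.derivative p
          = ((Polynomial.derivative e - (1 + e)).comp p) * Polynomial.derivative p := by
        rw [Polynomial.sub_comp, Polynomial.add_comp, Polynomial.one_comp]
        ring
      rw [this]
      have hz := zpoly_comp K hp0 hde2
      exact zpoly_mul_left K hz _ j' hj'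
    -- (1+X) * dq ≡ (1+X)*(1+q)*dp = (1+q)*((1+X)*dp) ≡ (1+q)
    have h1 : (((1 + Polynomial.X : Polynomial K)) * Polynomial.derivative q
        - ((1 + Polynomial.X)) * ((1 + q) * Polynomial.derivative p)).coeff j = 0 := by
      rw [← mul_sub]
      have hz : ∀ i' < N + 1,
          ((Polynomial.derivative q - (1 + q) * Polynomial.derivative p).coeff i') = 0 :=
        hstep1
      exact zpoly_mul_right K hz _ j hj
    have h2 : (((1 + Polynomial.X : Polynomial K)) * ((1 + q) * Polynomial.derivative p)
        - (1 + q)).coeff j = 0 := by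
      have heq : ((1 + Polynomial.X : Polynomial K)) * ((1 + q) * Polynomial.derivative p)
          - (1 + q)
          = (1 + q) * (((1 + Polynomial.X)) * Polynomial.derivative p - 1) := by
        ring
      rw [heq]
      have hz : ∀ i' < N + 1,
          ((((1 + Polynomial.X : Polynomial K)) * Polynomial.derivative p - 1).coeff i') = 0 := by
        intro i' hi'
        rw [Polynomial.coeff_sub, hZ1 i' hi', sub_self]
      exact zpoly_mul_right K hz _ j hj
    have := sub_eq_zero.mp (by
      have hadd : (((1 + Polynomial.X : Polynomial K)) * Polynomial.derivative q
          - (1 + q)).coeff j = 0 := by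
        have hcalc : ((1 + Polynomial.X : Polynomial K)) * Polynomial.derivative q - (1 + q)
            = (((1 + Polynomial.X)) * Polynomial.derivative q
                - ((1 + Polynomial.X)) * ((1 + q) * Polynomial.derivative p))
              + (((1 + Polynomial.X)) * ((1 + q) * Polynomial.derivative p) - (1 + q)) := by
          ring
        rw [hcalc, Polynomial.coeff_add, h1, h2, add_zero]
      rw [Polynomial.coeff_sub] at hadd
      exact hadd)
    exact this
  -- now strong induction on coefficients
  have key : ∀ i' ≤ N, q.coeff i' = (Polynomial.X : Polynomial K).coeff i' := by
    intro i'
    induction i' using Nat.strong_induction_on with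
    | _ i' ih =>
      intro hi'
      rcases i' with _ | j
      · rw [hq0, Polynomial.coeff_X_zero]
      · have hrelj := hrel j (by omega)
        -- expand LHS : coeff j (dq) + coeff j (X * dq)
        rw [Polynomial.coeff_add] at hrelj
        have hLHS : (((1 + Polynomial.X : Polynomial K)) * Polynomial.derivative q).coeff j
            = (Polynomial.derivative q).coeff j
              + (Polynomial.X * Polynomial.derivative q).coeff j := by
          rw [add_mul, one_mul, Polynomial.coeff_add]
        rw [hLHS] at hrelj
        have hd1 : (Polynomial.derivative q).coeff j = q.coeff (j + 1) * ((j : K) + 1) :=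
          Polynomial.coeff_derivative q j
        rcases j with _ | m
        · -- j = 0 : q.coeff 1 * 1 + 0 = 1 + q.coeff 0
          rw [hd1] at hrelj
          have hx0 : (Polynomial.X * Polynomial.derivative q).coeff 0 = 0 := by
            rw [Polynomial.mul_coeff_zero, Polynomial.coeff_X_zero, zero_mul]
          rw [hx0, add_zero, hq0, Polynomial.coeff_one, if_pos rfl, add_zero] at hrelj
          rw [Polynomial.coeff_X_one]
          have : q.coeff 1 * ((0 : K) + 1) = q.coeff 1 := by ring
          rw [show (((0 : ℕ) : K)) = (0 : K) from Nat.cast_zero, this] at hrelj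
          exact hrelj
        · -- j = m+1
          rw [hd1] at hrelj
          have hx : (Polynomial.X * Polynomial.derivative q).coeff (m + 1)
              = (Polynomial.derivative q).coeff m := Polynomial.coeff_X_mul _ m
          rw [hx, Polynomial.coeff_derivative] at hrelj
          have hqm : q.coeff (m + 1) = (Polynomial.X : Polynomial K).coeff (m + 1) :=
            ih (m + 1) (by omega) (by omega)
          have hone : (1 : Polynomial K).coeff (m + 1) = 0 := by
            rw [Polynomial.coeff_one, if_neg (Nat.succ_ne_zero m)]
          rw [hone, zero_add] at hrelj
          -- hrelj : q.coeff (m+2) * (m+1+1) + q.coeff (m+1) * (m+1) = q.coeff (m+1)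
          have hcast : ((m + 1 : ℕ) : K) = (m : K) + 1 := by push_cast; ring
          have hne : ((m : K) + 1 + 1) ≠ 0 := by
            have := Nat.cast_add_one_ne_zero (R := K) (m + 1)
            push_cast at this
            convert this using 2 <;> push_cast <;> ring
          have hXm2 : (Polynomial.X : Polynomial K).coeff (m + 1 + 1) = 0 := by
            rw [Polynomial.coeff_X, if_neg (by omega)]
          rw [hXm2]
          by_cases hm0 : m = 0
          · subst hm0
            -- q.coeff 1 = 1, relation: q.coeff 2 * 2 + 1 * 1 = 1
            rw [hqm, Polynomial.coeff_X_one] at hrelj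
            have : q.coeff (0 + 1 + 1) * (((0 + 1 : ℕ) : K) + 1) = 0 := by
              have h' := hrelj
              push_cast at h' ⊢
              linear_combination h'
            have hne' : (((0 + 1 : ℕ) : K) + 1) ≠ 0 := by
              push_cast
              norm_num
            rcases mul_eq_zero.mp this with h | h
            · exact h
            · exact absurd h hne'
          · have hXm1 : (Polynomial.X : Polynomial K).coeff (m + 1) = 0 := by
              rw [Polynomial.coeff_X, if_neg (by omega)]
            rw [hqm, hXm1] at hrelj
            -- q.coeff (m+2) * c + 0 * (m+1) = 0
            have : q.coeff (m + 1 + 1) * (((m + 1 : ℕ) : K) + 1) = 0 := by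
              push_cast at hrelj ⊢
              linear_combination hrelj
            have hne' : (((m + 1 : ℕ) : K) + 1) ≠ 0 := by
              push_cast
              exact hne
            rcases mul_eq_zero.mp this with h | h
            · exact h
            · exact absurd h hne'
  exact key i (by omega)

lemma formal_S3 (N : ℕ) : ∀ i < N,
    ((PowerSeries.trunc (N + 2) (PowerSeries.exp K))
      * (PowerSeries.trunc (N + 2) (PowerSeries.exp K)).comp (-Polynomial.X)).coeff i =
    (1 : Polynomial K).coeff i := by
  intro i hi
  set g := PowerSeries.trunc (N + 2) (PowerSeries.exp K) with hg_def
  have hmathlib : PowerSeries.exp K * PowerSeries.evalNegHom (PowerSeries.exp K) = 1 :=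
    PowerSeries.exp_mul_exp_neg_eq_one (A := K)
  -- trunc of evalNegHom exp agrees with g.comp (−X) below N+2
  have hagree : ∀ k < N + 2,
      (g.comp (-Polynomial.X)).coeff k
        = (PowerSeries.trunc (N + 2) (PowerSeries.evalNegHom (PowerSeries.exp K))).coeff k := by
    intro k hk
    rw [coeff_comp_neg, hg_def, PowerSeries.coeff_trunc, if_pos hk,
      PowerSeries.coeff_trunc, if_pos hk]
    show (-1 : K) ^ k * PowerSeries.coeff k (PowerSeries.exp K)
      = PowerSeries.coeff k (PowerSeries.rescale (-1) (PowerSeries.exp K))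
    rw [PowerSeries.coeff_rescale]
  have hz : ∀ k < N + 2,
      (g.comp (-Polynomial.X)
        - PowerSeries.trunc (N + 2) (PowerSeries.evalNegHom (PowerSeries.exp K))).coeff k = 0 := by
    intro k hk
    rw [Polynomial.coeff_sub, hagree k hk, sub_self]
  have hsplit : (g * g.comp (-Polynomial.X)).coeff i
      = (g * PowerSeries.trunc (N + 2) (PowerSeries.evalNegHom (PowerSeries.exp K))).coeff i := by
    have := zpoly_mul_right K (N := N + 2) hz g i (by omega)
    rw [mul_sub, Polynomial.coeff_sub] at this
    exact sub_eq_zero.mp this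
  rw [hsplit]
  have h2 := PowerSeries.coeff_mul_eq_coeff_trunc_mul_trunc (n := N + 2)
    (PowerSeries.exp K) (PowerSeries.evalNegHom (PowerSeries.exp K)) (show i < N + 2 by omega)
  rw [hmathlib] at h2
  rw [← Polynomial.coeff_coe, Polynomial.coe_mul, hg_def, ← h2]
  rw [PowerSeries.coeff_one, Polynomial.coeff_one]

end Formal

/-! ### Filtration layer -/

section Filtration

variable {K : Type*} [Field K] [CharZero K] {A : Type*} [Ring A] [Algebra K A]
  [UniformSpace A] [CompleteSpace A] [T2Space A] [IsTopologicalRing A]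
  [IsUniformAddGroup A]

variable {F : ℕ → Submodule K A}

lemma fil_anti (hF : IsCompleteFiltration K F) : ∀ {m n : ℕ}, m ≤ n → F n ≤ F m := by
  intro m n h
  induction h with
  | refl => exact le_refl _
  | step ih' => exact le_trans (hF.2.1 _) (by assumption)

lemma fil_top (hF : IsCompleteFiltration K F) (x : A) : x ∈ F 0 := by
  rw [hF.1]; trivial

lemma fil_mul_left (hF : IsCompleteFiltration K F) {N : ℕ} {w : A} (h : w ∈ F N) (c : A) :
    c * w ∈ F N := by
  have := hF.2.2.1 0 N c (fil_top hF c) w h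
  simpa using this

lemma fil_mul_right (hF : IsCompleteFiltration K F) {N : ℕ} {w : A} (h : w ∈ F N) (c : A) :
    w * c ∈ F N := by
  have := hF.2.2.1 N 0 w h c (fil_top hF c)
  simpa using this

lemma fil_pow (hF : IsCompleteFiltration K F) {a : A} (ha : a ∈ F 1) (n : ℕ) :
    a ^ n ∈ F n := by
  induction n with
  | zero => simpa using fil_top hF 1
  | succ m ih =>
    rw [pow_succ]
    exact hF.2.2.1 m 1 _ ih _ ha

lemma fil_closed (hF : IsCompleteFiltration K F) (n : ℕ) : IsClosed ((F n : Set A)) :=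
  AddSubgroup.isClosed_of_isOpen ((F n).toAddSubgroup) (hF.2.2.2.1 n)

lemma fil_summable (hF : IsCompleteFiltration K F) {ι : Type*} (t : ι → A) (d : ι → ℕ)
    (ht : ∀ i, t i ∈ F (d i)) (hd : Filter.Tendsto d Filter.cofinite Filter.atTop) :
    Summable t := by
  letI : NonarchimedeanAddGroup A :=
    { is_nonarchimedean := by
        intro U hU
        obtain ⟨n, hn⟩ := hF.2.2.2.2 U hU
        exact ⟨⟨(F n).toAddSubgroup, hF.2.2.2.1 n⟩, hn⟩ }
  apply NonarchimedeanAddGroup.summable_of_tendsto_cofinite_zero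
  intro U hU
  rw [Filter.mem_map]
  obtain ⟨n, hn⟩ := hF.2.2.2.2 U hU
  have h2 : ∀ᶠ i in Filter.cofinite, n ≤ d i := hd.eventually_ge_atTop n
  filter_upwards [h2] with i hi
  exact hn (fil_anti hF hi (ht i))

lemma fil_tsum_mem (hF : IsCompleteFiltration K F) {ι : Type*} (m : ℕ) (t : ι → A)
    (h : ∀ i, t i ∈ F m) : (∑' i, t i) ∈ F m := by
  by_cases hs : Summable t
  · exact (fil_closed hF m).mem_of_tendsto hs.hasSum
      (Filter.Eventually.of_forall fun s => sum_mem fun i _ => h i)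
  · rw [tsum_eq_zero_of_not_summable hs]
    exact zero_mem _

lemma fil_eq_of_forall (hF : IsCompleteFiltration K F) {x y : A}
    (h : ∀ N, x - y ∈ F N) : x = y := by
  by_contra hne
  have hd : x - y ≠ 0 := sub_ne_zero.mpr hne
  have hU : ({x - y}ᶜ : Set A) ∈ nhds (0 : A) := by
    apply IsOpen.mem_nhds isOpen_compl_singleton
    simp [Ne.symm hd]
  obtain ⟨n, hn⟩ := hF.2.2.2.2 _ hU
  exact (hn (h n)) rfl

lemma fil_congr_mul (hF : IsCompleteFiltration K F) {N : ℕ} {x x' y y' : A}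
    (hx : x - x' ∈ F N) (hy : y - y' ∈ F N) : x * y - x' * y' ∈ F N := by
  have heq : x * y - x' * y' = (x - x') * y + x' * (y - y') := by noncomm_ring
  rw [heq]
  exact add_mem (fil_mul_right hF hx y) (fil_mul_left hF hy x')

lemma fil_congr_pow (hF : IsCompleteFiltration K F) {N : ℕ} {x y : A} (h : x - y ∈ F N) :
    ∀ n : ℕ, x ^ n - y ^ n ∈ F N := by
  intro n
  induction n with
  | zero => simpa using zero_mem _
  | succ m ih =>
    have heq : x ^ (m + 1) - y ^ (m + 1) = (x ^ m - y ^ m) * x + y ^ m * (x - y) := by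
      rw [pow_succ, pow_succ]; noncomm_ring
    rw [heq]
    exact add_mem (fil_mul_right hF ih x) (fil_mul_left hF h (y ^ m))

lemma fil_aeval_congr (hF : IsCompleteFiltration K F) {N : ℕ} {x y : A} (h : x - y ∈ F N)
    (q : Polynomial K) : Polynomial.aeval x q - Polynomial.aeval y q ∈ F N := by
  induction q using Polynomial.induction_on' with
  | add p r hp hr =>
    rw [map_add, map_add]
    have heq : Polynomial.aeval x p + Polynomial.aeval x r
        - (Polynomial.aeval y p + Polynomial.aeval y r)
        = (Polynomial.aeval x p - Polynomial.aeval y p)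
          + (Polynomial.aeval x r - Polynomial.aeval y r) := by abel
    rw [heq]
    exact add_mem hp hr
  | monomial n c =>
    rw [Polynomial.aeval_monomial, Polynomial.aeval_monomial, ← mul_sub]
    exact fil_mul_left hF (fil_congr_pow hF h n) _

lemma fil_aeval_Z (hF : IsCompleteFiltration K F) {N : ℕ} {a : A} (ha : a ∈ F 1)
    (q : Polynomial K) (hq : ∀ i < N, q.coeff i = 0) : Polynomial.aeval a q ∈ F N := by
  rw [Polynomial.aeval_eq_sum_range' (n := q.natDegree + 1 + N) (by omega) a]
  apply sum_mem
  intro i _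
  by_cases hiN : i < N
  · rw [hq i hiN, zero_smul]
    exact zero_mem _
  · exact Submodule.smul_mem _ _ (fil_anti hF (le_of_not_gt hiN) (fil_pow hF ha i))

lemma fil_summable_smul (hF : IsCompleteFiltration K F) {a : A} (ha : a ∈ F 1) (c : ℕ → K) :
    Summable (fun n : ℕ => c n • a ^ n) :=
  fil_summable hF _ id (fun n => Submodule.smul_mem _ _ (fil_pow hF ha n))
    (by rw [Nat.cofinite_eq_atTop]; exact Filter.tendsto_id)

lemma fil_ev_mod (hF : IsCompleteFiltration K F) {a : A} (ha : a ∈ F 1) (f : PowerSeries K)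
    {N T : ℕ} (hNT : N ≤ T) :
    (∑' n : ℕ, PowerSeries.coeff n f • a ^ n)
      - Polynomial.aeval a (PowerSeries.trunc T f) ∈ F N := by
  rcases T with _ | T'
  · have hN0 : N = 0 := by omega
    subst hN0
    exact fil_top hF _
  · have hsum : Summable (fun n : ℕ => PowerSeries.coeff n f • a ^ n) :=
      fil_summable_smul hF ha _
    have hsplit := hsum.sum_add_tsum_nat_add (T' + 1)
    have haev : Polynomial.aeval a (PowerSeries.trunc (T' + 1) f)
        = ∑ i ∈ Finset.range (T' + 1), PowerSeries.coeff i f • a ^ i := by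
      rw [Polynomial.aeval_eq_sum_range' (PowerSeries.natDegree_trunc_lt f T') a]
      apply Finset.sum_congr rfl
      intro i hi
      rw [PowerSeries.coeff_trunc, if_pos (Finset.mem_range.mp hi)]
    rw [haev, ← hsplit, add_sub_cancel_left]
    exact fil_tsum_mem hF N _ (fun i => fil_anti hF (by omega)
      (Submodule.smul_mem _ _ (fil_pow hF ha (i + (T' + 1)))))

lemma expS_eq_tsum (a : A) :
    expS K a = ∑' n : ℕ, PowerSeries.coeff n (PowerSeries.exp K) • a ^ n := by
  rw [expS]
  exact tsum_congr fun n => by rw [coeff_exp_eq]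

lemma logS_eq_tsum (hF : IsCompleteFiltration K F) {z : A} (hz : z - 1 ∈ F 1) :
    logS K z = ∑' n : ℕ, PowerSeries.coeff n (Lser K) • (z - 1) ^ n := by
  have hsum : Summable (fun n : ℕ => PowerSeries.coeff n (Lser K) • (z - 1) ^ n) :=
    fil_summable_smul hF hz _
  rw [hsum.tsum_eq_zero_add]
  have h0 : PowerSeries.coeff 0 (Lser K) • (z - 1) ^ 0 = 0 := by
    rw [Lser, PowerSeries.coeff_mk, if_pos rfl, zero_smul]
  rw [h0, zero_add, logS]
  apply tsum_congr
  intro n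
  congr 1
  rw [Lser, PowerSeries.coeff_mk, if_neg (Nat.succ_ne_zero n)]
  push_cast
  rw [pow_succ, pow_succ]
  ring

lemma fil_exp_mod (hF : IsCompleteFiltration K F) {a : A} (ha : a ∈ F 1) {N T : ℕ}
    (hNT : N ≤ T) :
    expS K a - Polynomial.aeval a (PowerSeries.trunc T (PowerSeries.exp K)) ∈ F N := by
  rw [expS_eq_tsum]
  exact fil_ev_mod hF ha _ hNT

lemma fil_log_mod (hF : IsCompleteFiltration K F) {z : A} (hz : z - 1 ∈ F 1) {N T : ℕ}
    (hNT : N ≤ T) :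
    logS K z - Polynomial.aeval (z - 1) (PowerSeries.trunc T (Lser K)) ∈ F N := by
  rw [logS_eq_tsum hF hz]
  exact fil_ev_mod hF hz _ hNT

lemma fil_exp_sub_one (hF : IsCompleteFiltration K F) {a : A} (ha : a ∈ F 1) :
    expS K a - 1 ∈ F 1 := by
  have h := fil_exp_mod hF ha (N := 1) (T := 1) le_rfl
  rwa [htrunc_exp_one, map_one] at h

lemma fil_log_mem (hF : IsCompleteFiltration K F) {z : A} (hz : z - 1 ∈ F 1) :
    logS K z ∈ F 1 := by
  have h := fil_log_mod hF hz (N := 1) (T := 1) le_rfl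
  rwa [htrunc_L_one, map_zero, sub_zero] at h

lemma fil_exp_mul_exp_neg (hF : IsCompleteFiltration K F) {a : A} (ha : a ∈ F 1) :
    expS K a * expS K (-a) = 1 := by
  apply fil_eq_of_forall hF
  intro N
  set Q : Polynomial K := PowerSeries.trunc (N + 2) (PowerSeries.exp K)
    * (PowerSeries.trunc (N + 2) (PowerSeries.exp K)).comp (-Polynomial.X) with hQ_def
  have h1 := fil_exp_mod hF ha (N := N) (T := N + 2) (by omega)
  have h2 := fil_exp_mod hF (neg_mem ha) (N := N) (T := N + 2) (by omega)
  have hcomp : Polynomial.aeval a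
      ((PowerSeries.trunc (N + 2) (PowerSeries.exp K)).comp (-Polynomial.X))
      = Polynomial.aeval (-a) (PowerSeries.trunc (N + 2) (PowerSeries.exp K)) := by
    rw [Polynomial.aeval_comp, map_neg, Polynomial.aeval_X]
  have h3 : expS K a * expS K (-a) - Polynomial.aeval a Q ∈ F N := by
    rw [hQ_def, map_mul, hcomp]
    exact fil_congr_mul hF h1 h2
  have h4 : Polynomial.aeval a Q - 1 ∈ F N := by
    have hzz : ∀ i < N, (Q - 1).coeff i = 0 := by
      intro i hi
      rw [hQ_def, Polynomial.coeff_sub, formal_S3 K N i hi, sub_self]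
    have := fil_aeval_Z hF ha _ hzz
    rwa [map_sub, map_one] at this
  have hfin : expS K a * expS K (-a) - 1
      = (expS K a * expS K (-a) - Polynomial.aeval a Q) + (Polynomial.aeval a Q - 1) := by abel
  rw [hfin]
  exact add_mem h3 h4

lemma fil_log_exp (hF : IsCompleteFiltration K F) {a : A} (ha : a ∈ F 1) :
    logS K (expS K a) = a := by
  have hz : expS K a - 1 ∈ F 1 := fil_exp_sub_one hF ha
  apply fil_eq_of_forall hF
  intro N
  set z := expS K a with hz_def
  have h1 : logS K z - Polynomial.aeval (z - 1) (PowerSeries.trunc (N + 2) (Lser K)) ∈ F N :=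
    fil_log_mod hF hz (by omega)
  have htre : Polynomial.aeval a (PowerSeries.trunc (N + 2) (PowerSeries.exp K - 1))
      = Polynomial.aeval a (PowerSeries.trunc (N + 2) (PowerSeries.exp K)) - 1 := by
    rw [trunc_sub', map_sub]
    rw [show N + 2 = (N + 1) + 1 from rfl, PowerSeries.trunc_one, map_one]
  have h2 : (z - 1) - Polynomial.aeval a (PowerSeries.trunc (N + 2) (PowerSeries.exp K - 1))
      ∈ F N := by
    rw [htre, sub_sub_sub_cancel_right]
    exact fil_exp_mod hF ha (by omega)
  have h3 : Polynomial.aeval (z - 1) (PowerSeries.trunc (N + 2) (Lser K))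
      - Polynomial.aeval (Polynomial.aeval a (PowerSeries.trunc (N + 2) (PowerSeries.exp K - 1)))
          (PowerSeries.trunc (N + 2) (Lser K)) ∈ F N :=
    fil_aeval_congr hF h2 _
  have h4 : Polynomial.aeval
        (Polynomial.aeval a (PowerSeries.trunc (N + 2) (PowerSeries.exp K - 1)))
        (PowerSeries.trunc (N + 2) (Lser K))
      = Polynomial.aeval a ((PowerSeries.trunc (N + 2) (Lser K)).comp
          (PowerSeries.trunc (N + 2) (PowerSeries.exp K - 1))) :=
    (Polynomial.aeval_comp a).symm
  have h5 : Polynomial.aeval a ((PowerSeries.trunc (N + 2) (Lser K)).comp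
      (PowerSeries.trunc (N + 2) (PowerSeries.exp K - 1))) - a ∈ F N := by
    have hzz : ∀ i < N, (((PowerSeries.trunc (N + 2) (Lser K)).comp
        (PowerSeries.trunc (N + 2) (PowerSeries.exp K - 1))) - Polynomial.X).coeff i = 0 := by
      intro i hi
      rw [Polynomial.coeff_sub, formal_S1 K N i hi, sub_self]
    have := fil_aeval_Z hF ha _ hzz
    rwa [map_sub, Polynomial.aeval_X] at this
  have hfin : logS K z - a
      = (logS K z - Polynomial.aeval (z - 1) (PowerSeries.trunc (N + 2) (Lser K)))
        + (Polynomial.aeval (z - 1) (PowerSeries.trunc (N + 2) (Lser K))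
            - Polynomial.aeval
              (Polynomial.aeval a (PowerSeries.trunc (N + 2) (PowerSeries.exp K - 1)))
              (PowerSeries.trunc (N + 2) (Lser K)))
        + (Polynomial.aeval a ((PowerSeries.trunc (N + 2) (Lser K)).comp
            (PowerSeries.trunc (N + 2) (PowerSeries.exp K - 1))) - a) := by
    rw [h4]
    abel
  rw [hfin]
  exact add_mem (add_mem h1 h3) h5

lemma fil_exp_log (hF : IsCompleteFiltration K F) {z : A} (hz : z - 1 ∈ F 1) :
    expS K (logS K z) = z := by
  set b := logS K z with hb_def
  have hb : b ∈ F 1 := fil_log_mem hF hz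
  apply fil_eq_of_forall hF
  intro N
  have h1 : expS K b - Polynomial.aeval b (PowerSeries.trunc (N + 2) (PowerSeries.exp K))
      ∈ F N := fil_exp_mod hF hb (by omega)
  have h2 : b - Polynomial.aeval (z - 1) (PowerSeries.trunc (N + 2) (Lser K)) ∈ F N :=
    fil_log_mod hF hz (by omega)
  have h3 : Polynomial.aeval b (PowerSeries.trunc (N + 2) (PowerSeries.exp K))
      - Polynomial.aeval (Polynomial.aeval (z - 1) (PowerSeries.trunc (N + 2) (Lser K)))
          (PowerSeries.trunc (N + 2) (PowerSeries.exp K)) ∈ F N :=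
    fil_aeval_congr hF h2 _
  have h4 : Polynomial.aeval (Polynomial.aeval (z - 1) (PowerSeries.trunc (N + 2) (Lser K)))
        (PowerSeries.trunc (N + 2) (PowerSeries.exp K))
      = Polynomial.aeval (z - 1) ((PowerSeries.trunc (N + 2) (PowerSeries.exp K)).comp
          (PowerSeries.trunc (N + 2) (Lser K))) :=
    (Polynomial.aeval_comp (z - 1)).symm
  have h5 : Polynomial.aeval (z - 1) ((PowerSeries.trunc (N + 2) (PowerSeries.exp K)).comp
      (PowerSeries.trunc (N + 2) (Lser K))) - z ∈ F N := by
    have hco : (PowerSeries.trunc (N + 2) (PowerSeries.exp K)).comp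
        (PowerSeries.trunc (N + 2) (Lser K))
        = (1 : Polynomial K) + (PowerSeries.trunc (N + 2) (PowerSeries.exp K - 1)).comp
            (PowerSeries.trunc (N + 2) (Lser K)) := by
      have htr : PowerSeries.trunc (N + 2) (PowerSeries.exp K)
          = 1 + PowerSeries.trunc (N + 2) (PowerSeries.exp K - 1) := by
        rw [trunc_sub']
        rw [show N + 2 = (N + 1) + 1 from rfl, PowerSeries.trunc_one]
        ring
      rw [htr, Polynomial.add_comp, Polynomial.one_comp]
    rw [hco, map_add, map_one]
    have hzz : ∀ i < N, (((PowerSeries.trunc (N + 2) (PowerSeries.exp K - 1)).comp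
        (PowerSeries.trunc (N + 2) (Lser K))) - Polynomial.X).coeff i = 0 := by
      intro i hi
      rw [Polynomial.coeff_sub, formal_S2 K N i hi, sub_self]
    have hZ := fil_aeval_Z hF hz _ hzz
    rw [map_sub, Polynomial.aeval_X] at hZ
    have heq : (1 : A) + Polynomial.aeval (z - 1)
        ((PowerSeries.trunc (N + 2) (PowerSeries.exp K - 1)).comp
          (PowerSeries.trunc (N + 2) (Lser K))) - z
        = Polynomial.aeval (z - 1)
            ((PowerSeries.trunc (N + 2) (PowerSeries.exp K - 1)).comp
              (PowerSeries.trunc (N + 2) (Lser K))) - (z - 1) := by abel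
    rw [heq]
    exact hZ
  have hfin : expS K b - z
      = (expS K b - Polynomial.aeval b (PowerSeries.trunc (N + 2) (PowerSeries.exp K)))
        + (Polynomial.aeval b (PowerSeries.trunc (N + 2) (PowerSeries.exp K))
            - Polynomial.aeval
              (Polynomial.aeval (z - 1) (PowerSeries.trunc (N + 2) (Lser K)))
              (PowerSeries.trunc (N + 2) (PowerSeries.exp K)))
        + (Polynomial.aeval (z - 1) ((PowerSeries.trunc (N + 2) (PowerSeries.exp K)).comp
            (PowerSeries.trunc (N + 2) (Lser K))) - z) := by
    rw [h4]
    abel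
  rw [hfin]
  exact add_mem (add_mem h1 h3) h5

lemma expS_zero : expS K (0 : A) = 1 := by
  rw [expS]
  rw [tsum_eq_single 0 (by
    intro n hn
    rcases n with _ | m
    · exact absurd rfl hn
    · rw [zero_pow (Nat.succ_ne_zero m), smul_zero])]
  simp

lemma fil_P_cont (hF : IsCompleteFiltration K F) (P : A →ₗ[K] A)
    (hP : ∀ n, ∀ x ∈ F n, P x ∈ F n) : Continuous P := by
  apply continuous_of_continuousAt_zero P
  show Filter.Tendsto _ (nhds 0) (nhds (P 0))
  rw [map_zero]
  intro U hU
  rw [Filter.mem_map]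
  obtain ⟨n, hn⟩ := hF.2.2.2.2 U hU
  apply Filter.mem_of_superset ((hF.2.2.2.1 n).mem_nhds (zero_mem _))
  intro x hx
  exact hn (hP n x hx)

lemma fil_Ppow (P : A →ₗ[K] A) (hPmul : ∀ x y : A, P (x * y) = P x * P y) (v : A) :
    ∀ m : ℕ, P (v ^ (m + 1)) = (P v) ^ (m + 1) := by
  intro m
  induction m with
  | zero => simp
  | succ k ih => rw [pow_succ, hPmul, ih, ← pow_succ]

lemma fil_P_exp (hF : IsCompleteFiltration K F) (P : A →ₗ[K] A)
    (hP : ∀ n, ∀ x ∈ F n, P x ∈ F n) (hPmul : ∀ x y : A, P (x * y) = P x * P y)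
    {v : A} (hv : v ∈ F 1) :
    P (expS K v) = expS K (P v) + P 1 - 1 := by
  have hsum : Summable (fun n : ℕ => ((n.factorial : K))⁻¹ • v ^ n) :=
    fil_summable_smul hF hv _
  have hPv : P v ∈ F 1 := hP 1 v hv
  have hPsum : Summable (fun n : ℕ => ((n.factorial : K))⁻¹ • (P v) ^ n) :=
    fil_summable_smul hF hPv _
  have htsum : Summable (fun n : ℕ => ((n.factorial : K))⁻¹ • P (v ^ n)) :=
    fil_summable hF _ id (fun n => Submodule.smul_mem _ _ (hP n _ (fil_pow hF hv n)))
      (by rw [Nat.cofinite_eq_atTop]; exact Filter.tendsto_id)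
  have hmap : P (expS K v) = ∑' n : ℕ, ((n.factorial : K))⁻¹ • P (v ^ n) := by
    rw [expS]
    refine ((hsum.hasSum.map P.toAddMonoidHom (fil_P_cont hF P hP)).tsum_eq).symm.trans ?_
    refine tsum_congr fun n => ?_
    show P (((n.factorial : K))⁻¹ • v ^ n) = _
    rw [map_smul]
  rw [hmap, htsum.tsum_eq_zero_add, expS, hPsum.tsum_eq_zero_add]
  have h00 : (((0 : ℕ).factorial : K))⁻¹ • P (v ^ 0) = P 1 := by simp
  have h01 : (((0 : ℕ).factorial : K))⁻¹ • (P v) ^ 0 = 1 := by simp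
  rw [h00, h01]
  have hcong : (∑' n : ℕ, (((n + 1).factorial : K))⁻¹ • P (v ^ (n + 1)))
      = ∑' n : ℕ, (((n + 1).factorial : K))⁻¹ • (P v) ^ (n + 1) :=
    tsum_congr fun n => by rw [fil_Ppow P hPmul v n]
  rw [hcong]
  abel

lemma fil_P_exp_absorb (hF : IsCompleteFiltration K F) (P : A →ₗ[K] A)
    (hPmul : ∀ x y : A, P (x * y) = P x * P y) {v : A} (hv : P v ∈ F 1) :
    (expS K (P v) - 1) * P 1 = expS K (P v) - 1 := by
  have hPsum : Summable (fun n : ℕ => ((n.factorial : K))⁻¹ • (P v) ^ n) :=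
    fil_summable_smul hF hv _
  have htail : Summable (fun n : ℕ => (((n + 1).factorial : K))⁻¹ • (P v) ^ (n + 1)) :=
    (summable_nat_add_iff 1).mpr hPsum
  have he : expS K (P v) - 1 = ∑' n : ℕ, (((n + 1).factorial : K))⁻¹ • (P v) ^ (n + 1) := by
    rw [expS, hPsum.tsum_eq_zero_add]
    have h01 : (((0 : ℕ).factorial : K))⁻¹ • (P v) ^ 0 = 1 := by simp
    rw [h01, add_sub_cancel_left]
  rw [he, ← (htail.hasSum.mul_right (P 1)).tsum_eq]
  apply tsum_congr
  intro n
  rw [smul_mul_assoc]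
  congr 1
  rw [← fil_Ppow P hPmul v n, ← hPmul, mul_one]


end Filtration

variable {K : Type*} [Field K] [CharZero K] {A : Type*} [Ring A] [Algebra K A]
  [UniformSpace A] [CompleteSpace A] [T2Space A] [IsTopologicalRing A]
  [IsUniformAddGroup A]

theorem stmt10 (F : ℕ → Submodule K A) (hF : IsCompleteFiltration K F)
    (P : A →ₗ[K] A) (hP : ∀ n, ∀ x ∈ F n, P x ∈ F n)
    (χ : A → A) (hχmem : ∀ a ∈ F 1, χ a ∈ F 1)
    (hχ : ∀ a ∈ F 1, χ a = a - BCHs K (P (χ a)) (χ a - P (χ a)))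
    (hPP : ∀ x : A, P (P x) = P x) (hPmul : ∀ x y : A, P (x * y) = P x * P y) :
    ∀ u ∈ F 1, χ u = u + BCHs K (-(P u)) u ∧ P (χ u) = P u := by
  intro u hu
  have h := hχ u hu
  simp only [BCHs] at h
  set x := P (χ u) with hx_def
  set y := χ u - x with hy_def
  set w := expS K x * expS K y with hw_def
  have hχu : χ u ∈ F 1 := hχmem u hu
  have hxF : x ∈ F 1 := hP 1 _ hχu
  have hyF : y ∈ F 1 := sub_mem hχu hxF
  have hPu : P u ∈ F 1 := hP 1 u hu
  have hxy : x + y = χ u := by rw [hy_def]; abel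
  -- step 1 : logS w = u
  have hlogw : logS K w = u := by
    have h2 : χ u = u - logS K w + (x + y) := by rw [h]; abel
    rw [hxy] at h2
    nth_rewrite 1 [← zero_add (χ u)] at h2
    have h3 : (0 : A) = u - logS K w := add_right_cancel h2
    exact (sub_eq_zero.mp h3.symm).symm
  -- step 3 : w - 1 ∈ F 1
  have hw1 : w - 1 ∈ F 1 := by
    have hsx : expS K x - 1 ∈ F 1 := fil_exp_sub_one hF hxF
    have hsy : expS K y - 1 ∈ F 1 := fil_exp_sub_one hF hyF
    have heq : w - 1 = (expS K x - 1) * (expS K y - 1) + (expS K x - 1) + (expS K y - 1) := by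
      rw [hw_def]; noncomm_ring
    rw [heq]
    exact add_mem (add_mem (fil_mul_left hF hsy _) hsx) hsy
  -- step 4 : w = expS u
  have hwu : w = expS K u := by
    rw [← hlogw]
    exact (fil_exp_log hF hw1).symm
  -- step 5 : expS (-x) * expS u = expS y
  have hyw : expS K (-x) * expS K u = expS K y := by
    rw [← hwu, hw_def, ← mul_assoc]
    have hinv : expS K (-x) * expS K x = 1 := by
      have := fil_exp_mul_exp_neg hF (neg_mem hxF)
      rwa [neg_neg] at this
    rw [hinv, one_mul]
  -- step 6 : y = logS (expS (-x) * expS u)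
  have hylog : y = logS K (expS K (-x) * expS K u) := by
    rw [hyw]
    exact (fil_log_exp hF hyF).symm
  -- P computations
  have hPx : P x = x := hPP (χ u)
  have hPy : P y = 0 := by rw [hy_def, map_sub, hx_def, hPP, sub_self]
  have hPw : P w = P (expS K x) * P (expS K y) := by rw [hw_def]; exact hPmul _ _
  have hPex : P (expS K x) = expS K x + P 1 - 1 := by
    have := fil_P_exp hF P hP hPmul hxF
    rwa [hPx] at this
  have hPey : P (expS K y) = P 1 := by
    rw [fil_P_exp hF P hP hPmul hyF, hPy, expS_zero]
    abel
  have hid : P 1 * P 1 = P 1 := by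
    have := hPmul 1 1
    rw [one_mul] at this
    exact this.symm
  have habsorb : (expS K x - 1) * P 1 = expS K x - 1 := by
    have := fil_P_exp_absorb hF P hPmul (v := χ u) (by rw [← hx_def] at *; exact hxF)
    rwa [← hx_def] at this
  have hPw2 : P w = expS K x + P 1 - 1 := by
    rw [hPw, hPex, hPey]
    calc (expS K x + P 1 - 1) * P 1
        = (expS K x - 1) * P 1 + P 1 * P 1 := by noncomm_ring
      _ = (expS K x - 1) + P 1 := by rw [habsorb, hid]
      _ = expS K x + P 1 - 1 := by abel
  have hPwu : P w = expS K (P u) + P 1 - 1 := by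
    rw [hwu]
    exact fil_P_exp hF P hP hPmul hu
  have hexp_eq : expS K x = expS K (P u) := by
    have hcomb := hPw2.symm.trans hPwu
    have h1 : expS K x + (P 1 - 1) = expS K (P u) + (P 1 - 1) := by
      rw [← add_sub_assoc, ← add_sub_assoc]
      exact hcomb
    exact add_right_cancel h1
  have hxPu : x = P u := by
    have h1 := fil_log_exp hF hxF
    have h2 := fil_log_exp hF hPu
    rw [← h1, hexp_eq, h2]
  refine ⟨?_, hxPu⟩
  have hfin : χ u = P u + logS K (expS K (-(P u)) * expS K u) := by
    rw [← hxy, hylog, hxPu]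
  rw [hfin, BCHs]
  abel
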